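/- Let r₁ ≤ r₂, s = min(s₁,s₂), k = min(r₁ - 1, n - r₂). If A ⊗ B ∈ B^{r₁,s₁} ⊗ B^{r₂,s₂} is a classical highest weight element (ẽ_l(A ⊗ B) = 0 for all l = 1,…,n), then B = 0, a_{p,q} = 0 for all (p,q) not in {(r₁, r₂), (r₁-1, r₂+1), …, (r₁-k, r₂+k)}, and 0 ≤ a_{r₁-k, r₂+k} ≤ ⋯ ≤ a_{r₁-1, r₂+1} ≤ a_{r₁, r₂} ≤ s. Conversely, every such pair (A, 0) is a classical highest weight element. In particular the set of classical highest weight elements is in bijection with weakly decreasing sequences (a₀ ≥ a₁ ≥ ⋯ ≥ a_k) of non-negative integers with a₀ ≤ s. -/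

import Mathlib

open Finset

/-- Matrices of the polytope model: entry `a p q` for row `p`, column `q`. -/
abbrev Mat := ℕ → ℕ → ℕ

/-- A monotone lattice path `β(1) = (1,i), …, β(n) = (i,n)`: each step increases
the row or the column index by 1. -/
def IsPath (n i : ℕ) (β : ℕ → ℕ × ℕ) : Prop :=
  β 1 = (1, i) ∧ β n = (i, n) ∧
    ∀ s, 1 ≤ s → s < n →
      β (s + 1) = ((β s).1 + 1, (β s).2) ∨ β (s + 1) = ((β s).1, (β s).2 + 1)

/-- Membership in the Kirillov–Reshetikhin polytope `B^{i,m}` of type `A_n^{(1)}`: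
non-negative integer matrices indexed by `1 ≤ p ≤ i`, `i ≤ q ≤ n` (zero outside),
all of whose monotone lattice-path sums are at most `m`. -/
def MemKR (n i m : ℕ) (a : Mat) : Prop :=
  (∀ p q, ¬(1 ≤ p ∧ p ≤ i ∧ i ≤ q ∧ q ≤ n) → a p q = 0) ∧
  ∀ β : ℕ → ℕ × ℕ, IsPath n i β → ∑ s ∈ Icc 1 n, a (β s).1 (β s).2 ≤ m

/-- The set of maximizers of `F` on `S`. -/
def maximizers (S : Finset ℕ) (F : ℕ → ℕ) : Finset ℕ :=
  S.filter fun q => ∀ q' ∈ S, F q' ≤ F q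

/-- Smallest maximizer. -/
def argmaxLow (S : Finset ℕ) (F : ℕ → ℕ) : ℕ := WithTop.untopD 0 (maximizers S F).min

/-- Largest maximizer. -/
def argmaxHigh (S : Finset ℕ) (F : ℕ → ℕ) : ℕ := WithBot.unbotD 0 (maximizers S F).max

/-- For `l > i`: `G(q) = Σ_{j=1}^q a_{j,l-1} + Σ_{j=q}^i a_{j,l}`. -/
def Gplus (i : ℕ) (a : Mat) (l q : ℕ) : ℕ :=
  ∑ j ∈ Icc 1 q, a j (l - 1) + ∑ j ∈ Icc q i, a j l

/-- For `l < i`: `F(q) = Σ_{j=i}^q a_{l,j} + Σ_{j=q}^n a_{l+1,j}`. -/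
def Fminus (n i : ℕ) (a : Mat) (l q : ℕ) : ℕ :=
  ∑ j ∈ Icc i q, a l j + ∑ j ∈ Icc q n, a (l + 1) j

def pPlus (i : ℕ) (a : Mat) (l : ℕ) : ℕ := argmaxLow (Icc 1 i) (Gplus i a l)
def qPlus (i : ℕ) (a : Mat) (l : ℕ) : ℕ := argmaxHigh (Icc 1 i) (Gplus i a l)
def pMinus (n i : ℕ) (a : Mat) (l : ℕ) : ℕ := argmaxHigh (Icc i n) (Fminus n i a l)
def qMinus (n i : ℕ) (a : Mat) (l : ℕ) : ℕ := argmaxLow (Icc i n) (Fminus n i a l)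

/-- The statistic `φ_l` of the polytope model (`l = 0` is the affine one). -/
def phi (n i m : ℕ) (a : Mat) (l : ℕ) : ℤ :=
  if l = 0 then (a 1 n : ℤ)
  else if l = i then
    (m : ℤ) - ∑ j ∈ Icc 1 (i - 1), (a j i : ℤ) - ∑ j ∈ Icc i n, (a i j : ℤ)
  else if i < l then
    ∑ j ∈ Icc 1 (pPlus i a l), (a j (l - 1) : ℤ)
      - ∑ j ∈ Icc 1 (pPlus i a l - 1), (a j l : ℤ)
  else
    ∑ j ∈ Icc (pMinus n i a l) n, (a (l + 1) j : ℤ)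
      - ∑ j ∈ Icc (pMinus n i a l + 1) n, (a l j : ℤ)

/-- The statistic `ε_l` of the polytope model (`l = 0` is the affine one). -/
def eps (n i m : ℕ) (a : Mat) (l : ℕ) : ℤ :=
  if l = 0 then
    (m : ℤ) - ∑ j ∈ Icc i n, (a 1 j : ℤ) - ∑ j ∈ Icc 2 n, (a j n : ℤ)
  else if l = i then (a i i : ℤ)
  else if i < l then
    ∑ j ∈ Icc (qPlus i a l) i, (a j l : ℤ)
      - ∑ j ∈ Icc (qPlus i a l + 1) i, (a j (l - 1) : ℤ)
  else
    ∑ j ∈ Icc i (qMinus n i a l), (a l j : ℤ)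
      - ∑ j ∈ Icc i (qMinus n i a l - 1), (a (l + 1) j : ℤ)

/-- Update one entry of a matrix. -/
def upd (a : Mat) (p q v : ℕ) : Mat :=
  fun p' q' => if p' = p ∧ q' = q then v else a p' q'

/-- The Kashiwara raising operator `ẽ_l` on `B^{i,m}` (`l = 0` affine). -/
def eOp (n i m : ℕ) (a : Mat) (l : ℕ) : Option Mat :=
  if eps n i m a l ≤ 0 then none
  else some (
    if l = 0 then upd a 1 n (a 1 n + 1)
    else if l = i then upd a i i (a i i - 1)
    else if i < l then
      upd (upd a (qPlus i a l) (l - 1) (a (qPlus i a l) (l - 1) + 1))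
        (qPlus i a l) l (a (qPlus i a l) l - 1)
    else
      upd (upd a l (qMinus n i a l) (a l (qMinus n i a l) - 1))
        (l + 1) (qMinus n i a l) (a (l + 1) (qMinus n i a l) + 1))

/-- The Kashiwara lowering operator `f̃_l` on `B^{i,m}` (`l = 0` affine). -/
def fOp (n i m : ℕ) (a : Mat) (l : ℕ) : Option Mat :=
  if phi n i m a l ≤ 0 then none
  else some (
    if l = 0 then upd a 1 n (a 1 n - 1)
    else if l = i then upd a i i (a i i + 1)
    else if i < l then
      upd (upd a (pPlus i a l) (l - 1) (a (pPlus i a l) (l - 1) - 1))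
        (pPlus i a l) l (a (pPlus i a l) l + 1)
    else
      upd (upd a l (pMinus n i a l) (a l (pMinus n i a l) + 1))
        (l + 1) (pMinus n i a l) (a (l + 1) (pMinus n i a l) - 1))

/-- `ẽ_l` on the tensor product `B^{r₁,s₁} ⊗ B^{r₂,s₂}`. -/
def eTen (n r₁ s₁ r₂ s₂ l : ℕ) (x : Mat × Mat) : Option (Mat × Mat) :=
  if phi n r₂ s₂ x.2 l < eps n r₁ s₁ x.1 l then
    (eOp n r₁ s₁ x.1 l).map fun a' => (a', x.2)
  else (eOp n r₂ s₂ x.2 l).map fun b' => (x.1, b')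

/-- `f̃_l` on the tensor product `B^{r₁,s₁} ⊗ B^{r₂,s₂}`. -/
def fTen (n r₁ s₁ r₂ s₂ l : ℕ) (x : Mat × Mat) : Option (Mat × Mat) :=
  if phi n r₂ s₂ x.2 l ≤ eps n r₁ s₁ x.1 l then
    (fOp n r₁ s₁ x.1 l).map fun a' => (a', x.2)
  else (fOp n r₂ s₂ x.2 l).map fun b' => (x.1, b')

/-- Classical highest weight element of the tensor product. -/
def IsHW (n r₁ s₁ r₂ s₂ : ℕ) (x : Mat × Mat) : Prop :=
  ∀ l, 1 ≤ l → l ≤ n → eTen n r₁ s₁ r₂ s₂ l x = none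

/-- Cartan matrix of type `A_n`: `⟨α_r, α_j^∨⟩`. -/
def cartan (r j : ℕ) : ℤ :=
  if r = j then 2 else if r + 1 = j ∨ j + 1 = r then -1 else 0

/-- The pairing `⟨wt(A), α_j^∨⟩` where `wt(A) = m ω_i - Σ a_{p,q} α_{p,q}`,
and `α_{p,q} = α_p + ⋯ + α_q`. -/
def wtCoord (n i m : ℕ) (a : Mat) (j : ℕ) : ℤ :=
  (if j = i then (m : ℤ) else 0)
    - ∑ p ∈ Icc 1 i, ∑ q ∈ Icc i n, (a p q : ℤ) * ∑ r ∈ Icc p q, cartan r j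

/-- The matrix `b^Λ` with `(p,q)`-entry `c ((p+q) mod (n+1))` on the index range. -/
def bOf (n i : ℕ) (c : ℕ → ℕ) : Mat :=
  fun p q => if 1 ≤ p ∧ p ≤ i ∧ i ≤ q ∧ q ≤ n then c ((p + q) % (n + 1)) else 0

section helpers

lemma sum_Icc_split {M : Type*} [AddCommMonoid M] (f : ℕ → M) {a b c : ℕ}
    (h1 : a ≤ b + 1) (h2 : b ≤ c) :
    ∑ j ∈ Icc a c, f j = (∑ j ∈ Icc a b, f j) + ∑ j ∈ Icc (b+1) c, f j := by
  rw [← Finset.Ico_add_one_right_eq_Icc a c, ← Finset.Ico_add_one_right_eq_Icc a b, ← Finset.Ico_add_one_right_eq_Icc (b+1) c,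
    Finset.sum_Ico_consecutive f h1 (by omega)]

lemma sum_Icc_shift {M : Type*} [AddCommMonoid M] (f : ℕ → M) (a b : ℕ) :
    ∑ j ∈ Icc (a+1) (b+1), f j = ∑ j ∈ Icc a b, f (j+1) := by
  rw [← Finset.map_add_right_Icc a b 1, Finset.sum_map]
  rfl

lemma argmaxLow_spec (S : Finset ℕ) (hS : S.Nonempty) (F : ℕ → ℕ) :
    argmaxLow S F ∈ S ∧ ∀ q ∈ S, F q ≤ F (argmaxLow S F) := by
  obtain ⟨a, ha, hmax⟩ := S.exists_max_image F hS
  have hne : (maximizers S F).Nonempty := ⟨a, mem_filter.2 ⟨ha, hmax⟩⟩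
  have h1 : argmaxLow S F ∈ maximizers S F := by
    unfold argmaxLow
    rw [← Finset.coe_min' hne, WithTop.untopD_coe]
    exact Finset.min'_mem _ hne
  rw [maximizers, mem_filter] at h1
  exact h1

lemma argmaxHigh_spec (S : Finset ℕ) (hS : S.Nonempty) (F : ℕ → ℕ) :
    argmaxHigh S F ∈ S ∧ ∀ q ∈ S, F q ≤ F (argmaxHigh S F) := by
  obtain ⟨a, ha, hmax⟩ := S.exists_max_image F hS
  have hne : (maximizers S F).Nonempty := ⟨a, mem_filter.2 ⟨ha, hmax⟩⟩
  have h1 : argmaxHigh S F ∈ maximizers S F := by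
    unfold argmaxHigh
    rw [← Finset.coe_max' hne, WithBot.unbotD_coe]
    exact Finset.max'_mem _ hne
  rw [maximizers, mem_filter] at h1
  exact h1

lemma qPlus_spec {i l : ℕ} (a : Mat) (hi : 1 ≤ i) :
    qPlus i a l ∈ Icc 1 i ∧ ∀ q ∈ Icc 1 i, Gplus i a l q ≤ Gplus i a l (qPlus i a l) :=
  argmaxHigh_spec _ ⟨1, mem_Icc.2 ⟨le_rfl, hi⟩⟩ _

lemma pPlus_spec {i l : ℕ} (a : Mat) (hi : 1 ≤ i) :
    pPlus i a l ∈ Icc 1 i ∧ ∀ q ∈ Icc 1 i, Gplus i a l q ≤ Gplus i a l (pPlus i a l) :=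
  argmaxLow_spec _ ⟨1, mem_Icc.2 ⟨le_rfl, hi⟩⟩ _

lemma qMinus_spec {n i l : ℕ} (a : Mat) (hn : i ≤ n) :
    qMinus n i a l ∈ Icc i n ∧
      ∀ q ∈ Icc i n, Fminus n i a l q ≤ Fminus n i a l (qMinus n i a l) :=
  argmaxLow_spec _ ⟨i, mem_Icc.2 ⟨le_rfl, hn⟩⟩ _

lemma pMinus_spec {n i l : ℕ} (a : Mat) (hn : i ≤ n) :
    pMinus n i a l ∈ Icc i n ∧
      ∀ q ∈ Icc i n, Fminus n i a l q ≤ Fminus n i a l (pMinus n i a l) :=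
  argmaxHigh_spec _ ⟨i, mem_Icc.2 ⟨le_rfl, hn⟩⟩ _

end helpers

section unfolds

lemma eps_plus_def (n i m : ℕ) (a : Mat) (l : ℕ) (hi : 1 ≤ i) (hil : i < l) :
    eps n i m a l = ∑ j ∈ Icc (qPlus i a l) i, (a j l : ℤ)
      - ∑ j ∈ Icc (qPlus i a l + 1) i, (a j (l - 1) : ℤ) := by
  unfold eps
  rw [if_neg (by omega), if_neg (by omega), if_pos hil]

lemma eps_minus_def (n i m : ℕ) (a : Mat) (l : ℕ) (hl : 1 ≤ l) (hli : l < i) :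
    eps n i m a l = ∑ j ∈ Icc i (qMinus n i a l), (a l j : ℤ)
      - ∑ j ∈ Icc i (qMinus n i a l - 1), (a (l + 1) j : ℤ) := by
  unfold eps
  rw [if_neg (by omega), if_neg (by omega), if_neg (by omega)]

lemma eps_diag_def (n i m : ℕ) (a : Mat) (hi : 1 ≤ i) :
    eps n i m a i = (a i i : ℤ) := by
  unfold eps
  rw [if_neg (by omega), if_pos rfl]

lemma phi_plus_def (n i m : ℕ) (a : Mat) (l : ℕ) (hi : 1 ≤ i) (hil : i < l) :
    phi n i m a l = ∑ j ∈ Icc 1 (pPlus i a l), (a j (l - 1) : ℤ)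
      - ∑ j ∈ Icc 1 (pPlus i a l - 1), (a j l : ℤ) := by
  unfold phi
  rw [if_neg (by omega), if_neg (by omega), if_pos hil]

lemma phi_minus_def (n i m : ℕ) (a : Mat) (l : ℕ) (hl : 1 ≤ l) (hli : l < i) :
    phi n i m a l = ∑ j ∈ Icc (pMinus n i a l) n, (a (l + 1) j : ℤ)
      - ∑ j ∈ Icc (pMinus n i a l + 1) n, (a l j : ℤ) := by
  unfold phi
  rw [if_neg (by omega), if_neg (by omega), if_neg (by omega)]

lemma phi_diag_def (n i m : ℕ) (a : Mat) (hi : 1 ≤ i) :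
    phi n i m a i = (m : ℤ) - ∑ j ∈ Icc 1 (i - 1), (a j i : ℤ)
      - ∑ j ∈ Icc i n, (a i j : ℤ) := by
  unfold phi
  rw [if_neg (by omega), if_pos rfl]

end unfolds
section keys

lemma Gplus_key {i l q : ℕ} (a : Mat) (hq : 1 ≤ q) (hqi : q ≤ i) :
    Gplus i a l q + (∑ j ∈ Icc (q+1) i, a j (l-1)) + a i l
      = Gplus i a l i + ∑ j ∈ Icc q i, a j l := by
  unfold Gplus
  rw [sum_Icc_split (fun j => a j (l-1)) (show (1:ℕ) ≤ q+1 by omega) hqi,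
    Finset.Icc_self, Finset.sum_singleton]
  ring

lemma Fminus_key {n i l q : ℕ} (a : Mat) (hi : 1 ≤ i) (hq : i ≤ q) (hqn : q ≤ n) :
    Fminus n i a l q + (∑ j ∈ Icc i (q-1), a (l+1) j) + a l i
      = Fminus n i a l i + ∑ j ∈ Icc i q, a l j := by
  unfold Fminus
  rw [Finset.Icc_self, Finset.sum_singleton,
    sum_Icc_split (fun j => a (l+1) j) (show i ≤ (q-1)+1 by omega) (show q-1 ≤ n by omega),
    show q - 1 + 1 = q by omega]
  ring

lemma epsPlus_ge {n i m l : ℕ} (a : Mat) (hi : 1 ≤ i) (hil : i < l) :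
    (a i l : ℤ) ≤ eps n i m a l := by
  obtain ⟨hmem, hmax⟩ := qPlus_spec (l := l) a hi
  rw [mem_Icc] at hmem
  have hkey := Gplus_key (i := i) (l := l) (q := qPlus i a l) a hmem.1 hmem.2
  have hmaxi := hmax i (mem_Icc.2 ⟨hi, le_rfl⟩)
  have hN : (∑ j ∈ Icc (qPlus i a l + 1) i, a j (l-1)) + a i l
      ≤ ∑ j ∈ Icc (qPlus i a l) i, a j l := by omega
  rw [eps_plus_def n i m a l hi hil]
  have := (Nat.cast_le (α := ℤ)).mpr hN
  push_cast at this
  linarith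

lemma epsPlus_nonpos {n i m l : ℕ} {a : Mat} (hi : 1 ≤ i) (hil : i < l)
    (h : eps n i m a l ≤ 0) :
    a i l = 0 ∧ ∀ q, 1 ≤ q → q ≤ i →
      ∑ j ∈ Icc q i, a j l ≤ ∑ j ∈ Icc (q+1) i, a j (l-1) := by
  obtain ⟨hmem, hmax⟩ := qPlus_spec (l := l) a hi
  rw [mem_Icc] at hmem
  have hkey := Gplus_key (i := i) (l := l) (q := qPlus i a l) a hmem.1 hmem.2
  have hmaxi := hmax i (mem_Icc.2 ⟨hi, le_rfl⟩)
  rw [eps_plus_def n i m a l hi hil] at h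
  have hXY : ∑ j ∈ Icc (qPlus i a l) i, a j l
      ≤ ∑ j ∈ Icc (qPlus i a l + 1) i, a j (l-1) := by
    exact_mod_cast sub_nonpos.mp h
  refine ⟨by omega, fun q h1q hqi => ?_⟩
  have hk2 := Gplus_key (i := i) (l := l) (q := q) a h1q hqi
  have hq0 := hmax q (mem_Icc.2 ⟨h1q, hqi⟩)
  omega

lemma epsPlus_eq {n i m l : ℕ} {a : Mat} (hi : 1 ≤ i) (hil : i < l)
    (h : ∀ q, 1 ≤ q → q ≤ i →
      ∑ j ∈ Icc q i, a j l ≤ (∑ j ∈ Icc (q+1) i, a j (l-1)) + a i l) :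
    eps n i m a l = (a i l : ℤ) := by
  obtain ⟨hmem, hmax⟩ := qPlus_spec (l := l) a hi
  rw [mem_Icc] at hmem
  have hkey := Gplus_key (i := i) (l := l) (q := qPlus i a l) a hmem.1 hmem.2
  have hmaxi := hmax i (mem_Icc.2 ⟨hi, le_rfl⟩)
  have hh := h (qPlus i a l) hmem.1 hmem.2
  have hX : ∑ j ∈ Icc (qPlus i a l) i, a j l
      = (∑ j ∈ Icc (qPlus i a l + 1) i, a j (l-1)) + a i l := by omega
  rw [eps_plus_def n i m a l hi hil]
  have : (∑ j ∈ Icc (qPlus i a l) i, (a j l : ℤ))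
      = (∑ j ∈ Icc (qPlus i a l + 1) i, (a j (l-1) : ℤ)) + (a i l : ℤ) := by
    exact_mod_cast congrArg (Nat.cast (R := ℤ)) hX
  rw [this]; ring

lemma epsMinus_ge {n i m l : ℕ} (a : Mat) (hl : 1 ≤ l) (hli : l < i) (hin : i ≤ n) :
    (a l i : ℤ) ≤ eps n i m a l := by
  obtain ⟨hmem, hmax⟩ := qMinus_spec (l := l) a hin
  rw [mem_Icc] at hmem
  have hi : 1 ≤ i := by omega
  have hkey := Fminus_key (n := n) (i := i) (l := l) (q := qMinus n i a l) a hi hmem.1 hmem.2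
  have hmaxi := hmax i (mem_Icc.2 ⟨le_rfl, hin⟩)
  have hN : (∑ j ∈ Icc i (qMinus n i a l - 1), a (l+1) j) + a l i
      ≤ ∑ j ∈ Icc i (qMinus n i a l), a l j := by omega
  rw [eps_minus_def n i m a l hl hli]
  have := (Nat.cast_le (α := ℤ)).mpr hN
  push_cast at this
  linarith

lemma epsMinus_nonpos {n i m l : ℕ} {a : Mat} (hl : 1 ≤ l) (hli : l < i) (hin : i ≤ n)
    (h : eps n i m a l ≤ 0) :
    a l i = 0 ∧ ∀ q, i ≤ q → q ≤ n →
      ∑ j ∈ Icc i q, a l j ≤ ∑ j ∈ Icc i (q-1), a (l+1) j := by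
  obtain ⟨hmem, hmax⟩ := qMinus_spec (l := l) a hin
  rw [mem_Icc] at hmem
  have hi : 1 ≤ i := by omega
  have hkey := Fminus_key (n := n) (i := i) (l := l) (q := qMinus n i a l) a hi hmem.1 hmem.2
  have hmaxi := hmax i (mem_Icc.2 ⟨le_rfl, hin⟩)
  rw [eps_minus_def n i m a l hl hli] at h
  have hXY : ∑ j ∈ Icc i (qMinus n i a l), a l j
      ≤ ∑ j ∈ Icc i (qMinus n i a l - 1), a (l+1) j := by
    exact_mod_cast sub_nonpos.mp h
  refine ⟨by omega, fun q hiq hqn => ?_⟩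
  have hk2 := Fminus_key (n := n) (i := i) (l := l) (q := q) a hi hiq hqn
  have hq0 := hmax q (mem_Icc.2 ⟨hiq, hqn⟩)
  omega

lemma epsMinus_eq {n i m l : ℕ} {a : Mat} (hl : 1 ≤ l) (hli : l < i) (hin : i ≤ n)
    (h : ∀ q, i ≤ q → q ≤ n →
      ∑ j ∈ Icc i q, a l j ≤ (∑ j ∈ Icc i (q-1), a (l+1) j) + a l i) :
    eps n i m a l = (a l i : ℤ) := by
  obtain ⟨hmem, hmax⟩ := qMinus_spec (l := l) a hin
  rw [mem_Icc] at hmem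
  have hi : 1 ≤ i := by omega
  have hkey := Fminus_key (n := n) (i := i) (l := l) (q := qMinus n i a l) a hi hmem.1 hmem.2
  have hmaxi := hmax i (mem_Icc.2 ⟨le_rfl, hin⟩)
  have hh := h (qMinus n i a l) hmem.1 hmem.2
  have hX : ∑ j ∈ Icc i (qMinus n i a l), a l j
      = (∑ j ∈ Icc i (qMinus n i a l - 1), a (l+1) j) + a l i := by omega
  rw [eps_minus_def n i m a l hl hli]
  have : (∑ j ∈ Icc i (qMinus n i a l), (a l j : ℤ))
      = (∑ j ∈ Icc i (qMinus n i a l - 1), (a (l+1) j : ℤ)) + (a l i : ℤ) := by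
    exact_mod_cast congrArg (Nat.cast (R := ℤ)) hX
  rw [this]; ring

end keys
section phis

lemma phiPlus_key {i l p : ℕ} (a : Mat) (hp : 1 ≤ p) (hpi : p ≤ i) :
    Gplus i a l 1 + ∑ j ∈ Icc 1 p, a j (l-1)
      = Gplus i a l p + a 1 (l-1) + ∑ j ∈ Icc 1 (p-1), a j l := by
  unfold Gplus
  rw [Finset.Icc_self, Finset.sum_singleton,
    sum_Icc_split (fun j => a j l) (show (1:ℕ) ≤ (p-1)+1 by omega) (show p-1 ≤ i by omega),
    show p - 1 + 1 = p by omega]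
  ring

lemma phiPlus_nonneg {n i m l : ℕ} (a : Mat) (hi : 1 ≤ i) (hil : i < l) :
    0 ≤ phi n i m a l := by
  obtain ⟨hmem, hmax⟩ := pPlus_spec (l := l) a hi
  rw [mem_Icc] at hmem
  have hkey := phiPlus_key (i := i) (l := l) (p := pPlus i a l) a hmem.1 hmem.2
  have hmax1 := hmax 1 (mem_Icc.2 ⟨le_rfl, hi⟩)
  have hN : ∑ j ∈ Icc 1 (pPlus i a l - 1), a j l ≤ ∑ j ∈ Icc 1 (pPlus i a l), a j (l-1) := by
    omega
  rw [phi_plus_def n i m a l hi hil, sub_nonneg]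
  exact_mod_cast hN

lemma phiMinus_key {n i l p : ℕ} (a : Mat) (hin : i ≤ n) (hip : i ≤ p) (hpn : p ≤ n) :
    Fminus n i a l n + ∑ j ∈ Icc p n, a (l+1) j
      = Fminus n i a l p + a (l+1) n + ∑ j ∈ Icc (p+1) n, a l j := by
  unfold Fminus
  rw [Finset.Icc_self, Finset.sum_singleton,
    sum_Icc_split (fun j => a l j) (show i ≤ p+1 by omega) hpn]
  ring

lemma phiMinus_nonneg {n i m l : ℕ} (a : Mat) (hl : 1 ≤ l) (hli : l < i) (hin : i ≤ n) :
    0 ≤ phi n i m a l := by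
  obtain ⟨hmem, hmax⟩ := pMinus_spec (l := l) a hin
  rw [mem_Icc] at hmem
  have hkey := phiMinus_key (n := n) (i := i) (l := l) (p := pMinus n i a l) a hin hmem.1 hmem.2
  have hmaxn := hmax n (mem_Icc.2 ⟨hin, le_rfl⟩)
  have hN : ∑ j ∈ Icc (pMinus n i a l + 1) n, a l j
      ≤ ∑ j ∈ Icc (pMinus n i a l) n, a (l+1) j := by omega
  rw [phi_minus_def n i m a l hl hli, sub_nonneg]
  exact_mod_cast hN

def hookPath (i : ℕ) : ℕ → ℕ × ℕ := fun s => if s ≤ i then (s, i) else (i, s)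

lemma hookPath_isPath {n i : ℕ} (hi : 1 ≤ i) (hn : i ≤ n) : IsPath n i (hookPath i) := by
  refine ⟨by simp [hookPath, hi], ?_, ?_⟩
  · unfold hookPath
    by_cases h : n ≤ i
    · have hni : n = i := le_antisymm h hn
      simp [h, hni]
    · rw [if_neg h]
  · intro s hs1 hsn
    unfold hookPath
    by_cases h1 : s + 1 ≤ i
    · rw [if_pos h1, if_pos (by omega)]
      left; rfl
    · by_cases h2 : s ≤ i
      · rw [if_neg h1, if_pos h2]
        right
        have hsi : s = i := by omega
        subst hsi
        rfl
      · rw [if_neg h1, if_neg h2]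
        right; rfl

lemma hook_sum_eq {n i : ℕ} (a : Mat) (hi : 1 ≤ i) (hn : i ≤ n) :
    ∑ s ∈ Icc 1 n, a (hookPath i s).1 (hookPath i s).2
      = (∑ j ∈ Icc 1 (i-1), a j i) + ∑ j ∈ Icc i n, a i j := by
  rw [sum_Icc_split (fun s => a (hookPath i s).1 (hookPath i s).2)
    (show (1:ℕ) ≤ (i-1)+1 by omega) (show i-1 ≤ n by omega), show i-1+1 = i by omega]
  congr 1
  · refine Finset.sum_congr rfl fun s hs => ?_
    rw [mem_Icc] at hs
    unfold hookPath
    rw [if_pos (by omega)]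
  · refine Finset.sum_congr rfl fun s hs => ?_
    rw [mem_Icc] at hs
    unfold hookPath
    by_cases h : s ≤ i
    · have hsi : s = i := by omega
      subst hsi; simp
    · rw [if_neg h]

lemma hook_sum_le {n i m : ℕ} {a : Mat} (hi : 1 ≤ i) (hn : i ≤ n) (hK : MemKR n i m a) :
    (∑ j ∈ Icc 1 (i-1), a j i) + ∑ j ∈ Icc i n, a i j ≤ m := by
  have h := hK.2 (hookPath i) (hookPath_isPath hi hn)
  rwa [hook_sum_eq a hi hn] at h

lemma phi_diag_nonneg {n i m : ℕ} {a : Mat} (hi : 1 ≤ i) (hn : i ≤ n) (hK : MemKR n i m a) :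
    0 ≤ phi n i m a i := by
  have h := hook_sum_le hi hn hK
  rw [phi_diag_def n i m a hi]
  have := (Nat.cast_le (α := ℤ)).mpr h
  push_cast at this
  linarith

lemma phi_nonneg {n i m l : ℕ} {a : Mat} (hK : MemKR n i m a) (hi : 1 ≤ i) (hn : i ≤ n)
    (hl : 1 ≤ l) : 0 ≤ phi n i m a l := by
  rcases lt_trichotomy l i with h | h | h
  · exact phiMinus_nonneg a hl h hn
  · subst h; exact phi_diag_nonneg hi hn hK
  · exact phiPlus_nonneg a hi h

lemma hook_entry_le {n i m c : ℕ} {a : Mat} (hi : 1 ≤ i) (hn : i ≤ n) (hK : MemKR n i m a)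
    (hc1 : i ≤ c) (hc2 : c ≤ n) : a i c ≤ m := by
  have h := hK.2 (hookPath i) (hookPath_isPath hi hn)
  have hc : c ∈ Icc 1 n := mem_Icc.2 ⟨by omega, hc2⟩
  have hle := Finset.single_le_sum (f := fun s => a (hookPath i s).1 (hookPath i s).2)
    (fun _ _ => Nat.zero_le _) hc
  have he : a (hookPath i c).1 (hookPath i c).2 = a i c := by
    unfold hookPath
    by_cases h' : c ≤ i
    · have : c = i := by omega
      subst this; simp
    · rw [if_neg h']
  rw [← he]
  exact le_trans hle h

lemma eps_zero_fn {n i m l : ℕ} (hl : l ≠ 0) : eps n i m (fun _ _ => 0) l = 0 := by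
  unfold eps
  rw [if_neg hl]
  by_cases h : l = i
  · rw [if_pos h]; simp
  · rw [if_neg h]
    by_cases h2 : i < l
    · rw [if_pos h2]; simp
    · rw [if_neg h2]; simp

lemma phi_zero_fn {n i m l : ℕ} (hl : l ≠ 0) :
    phi n i m (fun _ _ => 0) l = if l = i then (m : ℤ) else 0 := by
  unfold phi
  rw [if_neg hl]
  by_cases h : l = i
  · rw [if_pos h, if_pos h]; simp
  · rw [if_neg h, if_neg h]
    by_cases h2 : i < l
    · rw [if_pos h2]; simp
    · rw [if_neg h2]; simp

lemma eOp_eq_none_iff {n i m l : ℕ} (a : Mat) : eOp n i m a l = none ↔ eps n i m a l ≤ 0 := by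
  unfold eOp
  by_cases h : eps n i m a l ≤ 0
  · rw [if_pos h]; simp [h]
  · rw [if_neg h]; simp [h]

lemma hw_extract {n r₁ s₁ r₂ s₂ : ℕ} {A B : Mat}
    (hHW : IsHW n r₁ s₁ r₂ s₂ (A, B)) {l : ℕ} (hl : 1 ≤ l) (hln : l ≤ n)
    (hphiB : 0 ≤ phi n r₂ s₂ B l) :
    eps n r₂ s₂ B l ≤ 0 ∧ eps n r₁ s₁ A l ≤ phi n r₂ s₂ B l := by
  have h := hHW l hl hln
  rw [show eTen n r₁ s₁ r₂ s₂ l (A, B)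
      = (if phi n r₂ s₂ B l < eps n r₁ s₁ A l then
          (eOp n r₁ s₁ A l).map (fun a' => (a', B))
        else (eOp n r₂ s₂ B l).map (fun b' => (A, b'))) from rfl] at h
  by_cases hc : phi n r₂ s₂ B l < eps n r₁ s₁ A l
  · rw [if_pos hc, Option.map_eq_none_iff] at h
    rw [eOp_eq_none_iff] at h
    linarith
  · rw [if_neg hc, Option.map_eq_none_iff] at h
    rw [eOp_eq_none_iff] at h
    exact ⟨h, not_lt.1 hc⟩

end phis
section forward

lemma Bzero {n r m : ℕ} {b : Mat} (hr : 1 ≤ r) (hrn : r ≤ n) (hK : MemKR n r m b)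
    (hE : ∀ l, 1 ≤ l → l ≤ n → eps n r m b l ≤ 0) : ∀ p q, b p q = 0 := by
  have main : ∀ t p q, r ≤ p + t → b p q = 0 := by
    intro t
    induction t with
    | zero =>
      intro p q hp
      by_cases hsup : 1 ≤ p ∧ p ≤ r ∧ r ≤ q ∧ q ≤ n
      · obtain ⟨hp1, hpr, hrq, hqn⟩ := hsup
        have hpe : p = r := by omega
        subst hpe
        rcases eq_or_lt_of_le hrq with hq | hq
        · subst hq
          have h := hE p hr hrn
          rw [eps_diag_def n p m b hr] at h
          have : b p p ≤ 0 := by exact_mod_cast h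
          omega
        · exact (epsPlus_nonpos hr hq (hE q (by omega) hqn)).1
      · exact hK.1 p q hsup
    | succ t ih =>
      intro p q hp
      by_cases hsup : 1 ≤ p ∧ p ≤ r ∧ r ≤ q ∧ q ≤ n
      · obtain ⟨hp1, hpr, hrq, hqn⟩ := hsup
        by_cases hpt : r ≤ p + t
        · exact ih p q hpt
        · have hplt : p < r := by omega
          have h := epsMinus_nonpos hp1 hplt hrn (hE p hp1 (by omega))
          rcases eq_or_lt_of_le hrq with hq | hq
          · rw [← hq]; exact h.1
          · have h2 := h.2 q hrq hqn
            have hY : ∑ j ∈ Icc r (q-1), b (p+1) j = 0 :=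
              Finset.sum_eq_zero fun j _ => ih (p+1) j (by omega)
            have hX : b p q ≤ ∑ j ∈ Icc r q, b p j :=
              Finset.single_le_sum (fun _ _ => Nat.zero_le _) (mem_Icc.2 ⟨hrq, le_rfl⟩)
            omega
      · exact hK.1 p q hsup
  exact fun p q => main r p q (by omega)

lemma Azero {n r₁ s₁ r₂ : ℕ} {A : Mat} (h1 : 1 ≤ r₁) (h12 : r₁ ≤ r₂) (h2n : r₂ ≤ n)
    (hA : MemKR n r₁ s₁ A)
    (hE : ∀ l, 1 ≤ l → l ≤ n → l ≠ r₂ → eps n r₁ s₁ A l ≤ 0) :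
    ∀ p q, p + q ≠ r₁ + r₂ → A p q = 0 := by
  have main : ∀ t, ∀ p c, 1 ≤ p → p + t = r₁ → r₁ ≤ c → c ≤ n → p + c ≠ r₁ + r₂ →
      A p c = 0 := by
    intro t
    induction t using Nat.strong_induction_on with
    | _ t ih =>
      intro p c hp1 hpt hrc hcn hne
      rcases Nat.eq_zero_or_pos t with ht | ht
      · have hpe : p = r₁ := by omega
        subst hpe
        rcases eq_or_lt_of_le hrc with hc | hc
        · subst hc
          have h := hE p h1 (by omega) (by omega)
          rw [eps_diag_def n p s₁ A h1] at h
          have : A p p ≤ 0 := by exact_mod_cast h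
          omega
        · exact (epsPlus_nonpos h1 hc (hE c (by omega) hcn (by omega))).1
      · have hplt : p < r₁ := by omega
        have hm := epsMinus_nonpos hp1 hplt (le_trans h12 h2n)
          (hE p hp1 (by omega) (by omega))
        rcases eq_or_lt_of_le hrc with hc | hc
        · rw [← hc]; exact hm.1
        · by_cases hcle : p + c < r₁ + r₂
          · have h2 := hm.2 c (by omega) hcn
            have hY : ∑ j ∈ Icc r₁ (c-1), A (p+1) j = 0 := by
              refine Finset.sum_eq_zero fun j hj => ?_
              rw [mem_Icc] at hj
              exact ih (t-1) (by omega) (p+1) j (by omega) (by omega) hj.1 (by omega)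
                (by omega)
            have hX : A p c ≤ ∑ j ∈ Icc r₁ c, A p j :=
              Finset.single_le_sum (fun _ _ => Nat.zero_le _) (mem_Icc.2 ⟨by omega, le_rfl⟩)
            omega
          · have hcr2 : r₂ < c := by omega
            have hp2 := epsPlus_nonpos h1 (show r₁ < c by omega)
              (hE c (by omega) hcn (by omega))
            have h2 := hp2.2 p hp1 (by omega)
            have hY : ∑ j ∈ Icc (p+1) r₁, A j (c-1) = 0 := by
              refine Finset.sum_eq_zero fun j hj => ?_
              rw [mem_Icc] at hj
              exact ih (r₁ - j) (by omega) j (c-1) (by omega) (by omega) (by omega)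
                (by omega) (by omega)
            have hX : A p c ≤ ∑ j ∈ Icc p r₁, A j c :=
              Finset.single_le_sum (f := fun j => A j c) (fun _ _ => Nat.zero_le _)
                (mem_Icc.2 ⟨le_rfl, by omega⟩)
            omega
  intro p q hne
  by_cases hsup : 1 ≤ p ∧ p ≤ r₁ ∧ r₁ ≤ q ∧ q ≤ n
  · exact main (r₁ - p) p q hsup.1 (by omega) hsup.2.2.1 hsup.2.2.2 hne
  · exact hA.1 p q hsup

lemma Amono {n r₁ s₁ r₂ : ℕ} {A : Mat} (h1 : 1 ≤ r₁) (h12 : r₁ ≤ r₂) (h2n : r₂ ≤ n)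
    (hzero : ∀ p q, p + q ≠ r₁ + r₂ → A p q = 0)
    (hE : ∀ l, 1 ≤ l → l ≤ n → l ≠ r₂ → eps n r₁ s₁ A l ≤ 0) :
    ∀ j, j + 1 ≤ min (r₁ - 1) (n - r₂) →
      A (r₁ - (j + 1)) (r₂ + (j + 1)) ≤ A (r₁ - j) (r₂ + j) := by
  intro j hj
  have hj1 : j + 1 ≤ r₁ - 1 := le_trans hj (min_le_left _ _)
  have hj2 : r₂ + (j + 1) ≤ n := by
    have := le_trans hj (min_le_right _ _); omega
  set l := r₁ - (j + 1) with hl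
  have hl1 : 1 ≤ l := by omega
  have hllt : l < r₁ := by omega
  have hm := epsMinus_nonpos hl1 hllt (le_trans h12 h2n) (hE l hl1 (by omega) (by omega))
  have h2 := hm.2 (r₂ + (j + 1)) (by omega) hj2
  have hX : A l (r₂ + (j + 1)) ≤ ∑ j' ∈ Icc r₁ (r₂ + (j + 1)), A l j' :=
    Finset.single_le_sum (fun _ _ => Nat.zero_le _) (mem_Icc.2 ⟨by omega, le_rfl⟩)
  have hY : ∑ j' ∈ Icc r₁ (r₂ + (j + 1) - 1), A (l + 1) j' = A (l + 1) (r₂ + j) := by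
    rw [show r₂ + (j + 1) - 1 = r₂ + j by omega]
    refine Finset.sum_eq_single_of_mem (r₂ + j) (mem_Icc.2 ⟨by omega, le_rfl⟩)
      fun b hb hbne => ?_
    rw [mem_Icc] at hb
    exact hzero (l + 1) b (by omega)
  have he : A (l + 1) (r₂ + j) = A (r₁ - j) (r₂ + j) := by
    rw [show l + 1 = r₁ - j by omega]
  omega

end forward
section converse

lemma sum_shift_le {f g : ℕ → ℕ} {a b : ℕ} (h : ∀ j, a ≤ j → j ≤ b → f j ≤ g (j+1)) :
    ∑ j ∈ Icc a b, f j ≤ ∑ j ∈ Icc (a+1) (b+1), g j := by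
  rw [sum_Icc_shift g a b]
  exact Finset.sum_le_sum fun j hj => by rw [mem_Icc] at hj; exact h j hj.1 hj.2

lemma sum_shift_le' {f g : ℕ → ℕ} {a b : ℕ} (h : ∀ j, a ≤ j → j ≤ b → f (j+1) ≤ g j) :
    ∑ j ∈ Icc (a+1) (b+1), f j ≤ ∑ j ∈ Icc a b, g j := by
  rw [sum_Icc_shift f a b]
  exact Finset.sum_le_sum fun j hj => by rw [mem_Icc] at hj; exact h j hj.1 hj.2

variable {n r₁ s₁ r₂ s₂ : ℕ} {A : Mat}

lemma E1' (hA : MemKR n r₁ s₁ A) (h1 : 1 ≤ r₁) (h12 : r₁ ≤ r₂)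
    (hzero : ∀ p q, p + q ≠ r₁ + r₂ → A p q = 0)
    (hmono : ∀ j, j + 1 ≤ min (r₁ - 1) (n - r₂) →
      A (r₁ - (j + 1)) (r₂ + (j + 1)) ≤ A (r₁ - j) (r₂ + j))
    {j l : ℕ} (hj1 : 1 ≤ j) (hjr : j < r₁) (hlr : r₁ < l) :
    A j l ≤ A (j+1) (l-1) := by
  by_cases hd : j + l = r₁ + r₂
  · by_cases hln : l ≤ n
    · have hd2 : r₂ < l := by omega
      have h' := hmono (l - r₂ - 1) (by omega)
      rw [show l - r₂ - 1 + 1 = l - r₂ by omega, show r₁ - (l - r₂) = j by omega,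
        show r₂ + (l - r₂) = l by omega, show r₁ - (l - r₂ - 1) = j + 1 by omega,
        show r₂ + (l - r₂ - 1) = l - 1 by omega] at h'
      exact h'
    · rw [hA.1 j l (by omega)]
      exact Nat.zero_le _
  · rw [hzero j l (by omega)]
    exact Nat.zero_le _

lemma E2' (hA : MemKR n r₁ s₁ A) (h1 : 1 ≤ r₁) (h12 : r₁ ≤ r₂) (h2n : r₂ ≤ n)
    (hzero : ∀ p q, p + q ≠ r₁ + r₂ → A p q = 0)
    (hmono : ∀ j, j + 1 ≤ min (r₁ - 1) (n - r₂) →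
      A (r₁ - (j + 1)) (r₂ + (j + 1)) ≤ A (r₁ - j) (r₂ + j))
    {l j : ℕ} (hl1 : 1 ≤ l) (hlr : l < r₁) (hj : r₁ ≤ j) :
    A l (j+1) ≤ A (l+1) j := by
  by_cases hd : l + (j+1) = r₁ + r₂
  · by_cases hjn : j + 1 ≤ n
    · have h' := hmono (r₁ - l - 1) (by omega)
      rw [show r₁ - l - 1 + 1 = r₁ - l by omega, show r₁ - (r₁ - l) = l by omega,
        show r₂ + (r₁ - l) = j + 1 by omega, show r₁ - (r₁ - l - 1) = l + 1 by omega,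
        show r₂ + (r₁ - l - 1) = j by omega] at h'
      exact h'
    · rw [hA.1 l (j+1) (by omega)]
      exact Nat.zero_le _
  · rw [hzero l (j+1) (by omega)]
    exact Nat.zero_le _

lemma converse_epsPlus (hA : MemKR n r₁ s₁ A) (h1 : 1 ≤ r₁) (h12 : r₁ ≤ r₂)
    (hzero : ∀ p q, p + q ≠ r₁ + r₂ → A p q = 0)
    (hmono : ∀ j, j + 1 ≤ min (r₁ - 1) (n - r₂) →
      A (r₁ - (j + 1)) (r₂ + (j + 1)) ≤ A (r₁ - j) (r₂ + j))
    {l : ℕ} (hlr : r₁ < l) :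
    eps n r₁ s₁ A l = (A r₁ l : ℤ) := by
  refine epsPlus_eq h1 hlr fun q h1q hqi => ?_
  rw [sum_Icc_split (fun j => A j l) (show q ≤ (r₁-1)+1 by omega) (show r₁-1 ≤ r₁ by omega),
    show r₁ - 1 + 1 = r₁ by omega, Finset.Icc_self, Finset.sum_singleton]
  have hle := sum_shift_le (f := fun j => A j l) (g := fun j => A j (l-1)) (a := q) (b := r₁-1)
    (fun j hja hjb => E1' hA h1 h12 hzero hmono (by omega) (by omega) hlr)
  rw [show r₁ - 1 + 1 = r₁ by omega] at hle
  exact Nat.add_le_add_right hle (A r₁ l)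

lemma converse_epsMinus (hA : MemKR n r₁ s₁ A) (h1 : 1 ≤ r₁) (h12 : r₁ ≤ r₂) (h2n : r₂ ≤ n)
    (hzero : ∀ p q, p + q ≠ r₁ + r₂ → A p q = 0)
    (hmono : ∀ j, j + 1 ≤ min (r₁ - 1) (n - r₂) →
      A (r₁ - (j + 1)) (r₂ + (j + 1)) ≤ A (r₁ - j) (r₂ + j))
    {l : ℕ} (hl1 : 1 ≤ l) (hlr : l < r₁) :
    eps n r₁ s₁ A l = (A l r₁ : ℤ) := by
  refine epsMinus_eq hl1 hlr (le_trans h12 h2n) fun q hq1 hqn => ?_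
  rw [sum_Icc_split (fun j => A l j) (show r₁ ≤ r₁+1 by omega) hq1,
    Finset.Icc_self, Finset.sum_singleton]
  have hle := sum_shift_le' (f := fun j => A l j) (g := fun j => A (l+1) j) (a := r₁) (b := q-1)
    (fun j hja hjb => E2' hA h1 h12 h2n hzero hmono hl1 hlr hja)
  rw [show q - 1 + 1 = q by omega] at hle
  calc A l r₁ + ∑ j ∈ Icc (r₁+1) q, A l j
      = (∑ j ∈ Icc (r₁+1) q, A l j) + A l r₁ := Nat.add_comm _ _
    _ ≤ (∑ j ∈ Icc r₁ (q-1), A (l+1) j) + A l r₁ := Nat.add_le_add_right hle _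

end converse

/-- classification of classical highest weight elements of
`B^{r₁,s₁} ⊗ B^{r₂,s₂}` for `r₁ ≤ r₂`: `B = 0`, `A` is supported on the
antidiagonal `{(r₁-j, r₂+j) : 0 ≤ j ≤ k}`, with entries weakly increasing
towards `(r₁,r₂)` and `a_{r₁,r₂} ≤ min(s₁,s₂)`, and conversely. -/
theorem stmt8 (n r₁ s₁ r₂ s₂ : ℕ) (h1 : 1 ≤ r₁) (h12 : r₁ ≤ r₂) (h2n : r₂ ≤ n)
    (A B : Mat) (hA : MemKR n r₁ s₁ A) (hB : MemKR n r₂ s₂ B) :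
    IsHW n r₁ s₁ r₂ s₂ (A, B) ↔
      (B = fun _ _ => 0) ∧
      (∀ p q, p + q ≠ r₁ + r₂ → A p q = 0) ∧
      (∀ j, j + 1 ≤ min (r₁ - 1) (n - r₂) →
        A (r₁ - (j + 1)) (r₂ + (j + 1)) ≤ A (r₁ - j) (r₂ + j)) ∧
      A r₁ r₂ ≤ min s₁ s₂ := by
  have hr2 : 1 ≤ r₂ := le_trans h1 h12
  have hrn : r₁ ≤ n := le_trans h12 h2n
  constructor
  · intro hHW
    have hcond : ∀ l, 1 ≤ l → l ≤ n →
        eps n r₂ s₂ B l ≤ 0 ∧ eps n r₁ s₁ A l ≤ phi n r₂ s₂ B l :=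
      fun l hl hln => hw_extract hHW hl hln (phi_nonneg hB hr2 h2n hl)
    have hB0 : ∀ p q, B p q = 0 :=
      Bzero hr2 h2n hB fun l hl hln => (hcond l hl hln).1
    have hBe : B = fun _ _ => 0 := funext fun p => funext fun q => hB0 p q
    subst hBe
    have hE : ∀ l, 1 ≤ l → l ≤ n → l ≠ r₂ → eps n r₁ s₁ A l ≤ 0 := by
      intro l hl hln hlr
      have h := (hcond l hl hln).2
      rwa [phi_zero_fn (by omega), if_neg hlr] at h
    have hEr2 : eps n r₁ s₁ A r₂ ≤ (s₂ : ℤ) := by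
      have h := (hcond r₂ hr2 h2n).2
      rwa [phi_zero_fn (by omega), if_pos rfl] at h
    have hzero := Azero h1 h12 h2n hA hE
    refine ⟨rfl, hzero, Amono h1 h12 h2n hzero hE, ?_⟩
    have hs1 : A r₁ r₂ ≤ s₁ := hook_entry_le h1 hrn hA h12 h2n
    have hs2 : A r₁ r₂ ≤ s₂ := by
      rcases eq_or_lt_of_le h12 with h | h
      · rw [← h, eps_diag_def n r₁ s₁ A h1] at hEr2
        rw [← h]
        exact_mod_cast hEr2
      · have hge := epsPlus_ge (n := n) (m := s₁) A h1 h
        have : (A r₁ r₂ : ℤ) ≤ s₂ := le_trans hge hEr2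
        exact_mod_cast this
    omega
  · rintro ⟨hBe, hzero, hmono, hbound⟩
    subst hBe
    intro l hl hln
    have hepsA : eps n r₁ s₁ A l ≤ phi n r₂ s₂ (fun _ _ => 0) l := by
      rw [phi_zero_fn (by omega)]
      rcases lt_trichotomy l r₁ with h | h | h
      · rw [converse_epsMinus hA h1 h12 h2n hzero hmono hl h,
          if_neg (show l ≠ r₂ by omega), hzero l r₁ (by omega)]
        simp
      · subst h
        rw [eps_diag_def n l s₁ A h1]
        by_cases h' : l = r₂
        · rw [if_pos h']
          have hb : A l l ≤ s₂ := by
            have := hbound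
            rw [← h'] at this
            omega
          exact_mod_cast hb
        · rw [if_neg h', hzero l l (by omega)]
          simp
      · rw [converse_epsPlus hA h1 h12 hzero hmono h]
        by_cases h' : l = r₂
        · rw [if_pos h', h']
          have hb : A r₁ r₂ ≤ s₂ := by omega
          exact_mod_cast hb
        · rw [if_neg h', hzero r₁ l (by omega)]
          simp
    rw [show eTen n r₁ s₁ r₂ s₂ l (A, fun _ _ => 0)
        = (if phi n r₂ s₂ (fun _ _ => 0) l < eps n r₁ s₁ A l then
            (eOp n r₁ s₁ A l).map (fun a' => (a', fun _ _ => 0))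
          else (eOp n r₂ s₂ (fun _ _ => 0) l).map (fun b' => (A, b'))) from rfl,
      if_neg (not_lt.2 hepsA),
      (eOp_eq_none_iff _).2 (le_of_eq (eps_zero_fn (by omega)))]
    rfl
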